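/- Let (X, 𝒜, μ) be a probability space whose σ-algebra 𝒜 is countably generated, and let ℙ be a partition of X into measurable sets. If {μ_P : P ∈ ℙ} and {μ'_P : P ∈ ℙ} are both disintegrations of μ with respect to ℙ, then μ_P = μ'_P for μ̂-almost every P ∈ ℙ. -/

import Mathlib

open MeasureTheory Filter Set Topology

namespace ErgodicDecomposition

variable {X : Type*}

/-- `ℙ` is a partition of `X`: every point lies in exactly one element of `ℙ`. -/
def IsPartition (ℙ : Set (Set X)) : Prop := ∀ x : X, ∃! P, P ∈ ℙ ∧ x ∈ P

open Classical in
/-- The element of `ℙ` containing `x` (with junk value `∅` if there is none);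
this is the canonical projection `τ̂ : X → ℙ`. -/
noncomputable def partOf (ℙ : Set (Set X)) (x : X) : Set X :=
  if h : ∃ P, P ∈ ℙ ∧ x ∈ P then h.choose else ∅

/-- `ν` is a disintegration of `μ` with respect to the partition `ℙ`.  All statements about
the quotient space `ℙ` (its σ-algebra, the quotient measure `μ̂`, measurability of
`P ↦ μ_P(E)` and integration against `μ̂`) are expressed, equivalently, after pulling back
along the canonical projection `x ↦ partOf ℙ x`, since the σ-algebra of `ℙ` is by definition
the pushforward σ-algebra and `μ̂` is the pushforward measure. -/
def IsDisintegration [MeasurableSpace X] (μ : Measure X) (ℙ : Set (Set X))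
    (ν : Set X → Measure X) : Prop :=
  (∀ P ∈ ℙ, IsProbabilityMeasure (ν P)) ∧
  (∀ᵐ x ∂μ, ν (partOf ℙ x) (partOf ℙ x) = 1) ∧
  (∀ E : Set X, MeasurableSet E →
    Measurable (fun x => ν (partOf ℙ x) E) ∧ μ E = ∫⁻ x, ν (partOf ℙ x) E ∂μ)

/-- `ℙ` is a measurable partition for `μ`: a partition of `X` into measurable sets such that
there are a full measure set `X₀` and a refining sequence of countable partitions `Ps n` into
measurable sets with `P(x) = ⋂ n, P_n(x)` for every `x ∈ X₀`. -/
def IsMeasurablePartition [MeasurableSpace X] (μ : Measure X) (ℙ : Set (Set X)) : Prop :=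
  IsPartition ℙ ∧ (∀ P ∈ ℙ, MeasurableSet P) ∧
  ∃ X₀ : Set X, MeasurableSet X₀ ∧ μ X₀ = 1 ∧
  ∃ Ps : ℕ → Set (Set X),
    (∀ n, (Ps n).Countable) ∧
    (∀ n, IsPartition (Ps n)) ∧
    (∀ n, ∀ P ∈ Ps n, MeasurableSet P) ∧
    (∀ n, ∀ B ∈ Ps (n + 1), ∃ A ∈ Ps n, B ⊆ A) ∧
    (∀ x ∈ X₀, partOf ℙ x = ⋂ n, partOf (Ps n) x)

open Classical in
/-- `τ(x, A)`: the lim-inf of the asymptotic frequency of visits of the orbit of `x` to `A`. -/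
noncomputable def visitFreq (f : X → X) (A : Set X) (x : X) : ℝ :=
  atTop.liminf fun n : ℕ =>
    (((Finset.range n).filter fun i => f^[i] x ∈ A).card : ℝ) / n

/-- The equivalence class of `x` for the relation `x ∼ y ↔ τ(x,A) = τ(y,A)` for all `A ∈ 𝒜₀`. -/
def dynClass (f : X → X) (𝒜₀ : Set (Set X)) (x : X) : Set X :=
  {y | ∀ A ∈ 𝒜₀, visitFreq f A y = visitFreq f A x}

/-- The dynamical partition of `X` with respect to `f` and the countable algebra `𝒜₀`. -/
def dynPartition (f : X → X) (𝒜₀ : Set (Set X)) : Set (Set X) :=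
  {P | ∃ x : X, P = dynClass f 𝒜₀ x}


lemma partOf_spec {ℙ : Set (Set X)} (hpart : IsPartition ℙ) (x : X) :
    partOf ℙ x ∈ ℙ ∧ x ∈ partOf ℙ x := by
  have h : ∃ P, P ∈ ℙ ∧ x ∈ P := (hpart x).exists
  rw [partOf, dif_pos h]
  exact h.choose_spec

lemma partOf_eq_of_mem {ℙ : Set (Set X)} (hpart : IsPartition ℙ) {x y : X}
    (hy : y ∈ partOf ℙ x) : partOf ℙ y = partOf ℙ x :=
  (hpart y).unique ⟨(partOf_spec hpart y).1, (partOf_spec hpart y).2⟩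
    ⟨(partOf_spec hpart x).1, hy⟩

lemma countable_generatePiSystem {α : Type*} {S : Set (Set α)} (hS : S.Countable) :
    (generatePiSystem S).Countable := by
  have hsub : generatePiSystem S ⊆ sInter '' {t : Set (Set α) | t.Finite ∧ t ⊆ S} := by
    intro s hs
    induction hs with
    | base h => exact ⟨{_}, ⟨finite_singleton _, singleton_subset_iff.2 h⟩, by simp⟩
    | inter _ _ _ ih1 ih2 =>
      obtain ⟨T₁, ⟨hT₁f, hT₁s⟩, rfl⟩ := ih1
      obtain ⟨T₂, ⟨hT₂f, hT₂s⟩, rfl⟩ := ih2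
      exact ⟨T₁ ∪ T₂, ⟨hT₁f.union hT₂f, union_subset hT₁s hT₂s⟩, sInter_union _ _⟩
  exact ((countable_setOf_finite_subset hS).image _).mono hsub

/-- For a disintegration `ν` of `μ`, a measurable set `E` and a measurable set `Q` that is
saturated for the partition `ℙ`, the measure of `E ∩ Q` equals the integral of `ν P (E)` over
the classes contained in `Q`. -/
lemma lintegral_saturated [MeasurableSpace X] {μ : Measure X}
    {ℙ : Set (Set X)} (hpart : IsPartition ℙ) (hmeas : ∀ P ∈ ℙ, MeasurableSet P)
    {ν : Set X → Measure X} (hν : IsDisintegration μ ℙ ν)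
    {E Q : Set X} (hE : MeasurableSet E) (hQ : MeasurableSet Q)
    (hsat : ∀ x ∈ Q, partOf ℙ x ⊆ Q) :
    μ (E ∩ Q) = ∫⁻ x in Q, ν (partOf ℙ x) E ∂μ := by
  obtain ⟨hprob, hconc, hint⟩ := hν
  rw [(hint _ (hE.inter hQ)).2, ← lintegral_indicator hQ (fun x => ν (partOf ℙ x) E)]
  refine lintegral_congr_ae ?_
  filter_upwards [hconc] with x hx
  have hPm : partOf ℙ x ∈ ℙ := (partOf_spec hpart x).1
  have hprobx : IsProbabilityMeasure (ν (partOf ℙ x)) := hprob _ hPm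
  have hnull : ν (partOf ℙ x) (partOf ℙ x)ᶜ = 0 := by
    rw [measure_compl (hmeas _ hPm) (measure_ne_top _ _), hx, measure_univ, tsub_self]
  by_cases hxQ : x ∈ Q
  · rw [indicator_of_mem hxQ]
    refine le_antisymm (measure_mono inter_subset_left) ?_
    calc ν (partOf ℙ x) E = ν (partOf ℙ x) (E ∩ partOf ℙ x) :=
          (measure_inter_conull hnull).symm
      _ ≤ ν (partOf ℙ x) (E ∩ Q) :=
          measure_mono (inter_subset_inter_right _ (hsat x hxQ))
  · rw [indicator_of_notMem hxQ]
    have hQP : Q ∩ partOf ℙ x = ∅ := by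
      ext y
      simp only [mem_inter_iff, mem_empty_iff_false, iff_false, not_and]
      intro hyQ hyP
      exact hxQ (hsat y hyQ (partOf_eq_of_mem hpart hyP ▸ (partOf_spec hpart x).2))
    have hsub : E ∩ Q ⊆ (partOf ℙ x)ᶜ := fun y hy hyP =>
      (eq_empty_iff_forall_notMem.1 hQP y) ⟨hy.2, hyP⟩
    exact le_antisymm ((measure_mono hsub).trans hnull.le) zero_le

/-- One-sided comparison: the set where one disintegration gives strictly smaller measure to a
fixed measurable set `E` than another is null. -/
lemma null_lt_set [MeasurableSpace X] {μ : Measure X} [IsProbabilityMeasure μ]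
    {ℙ : Set (Set X)} (hpart : IsPartition ℙ) (hmeas : ∀ P ∈ ℙ, MeasurableSet P)
    {ν ν' : Set X → Measure X} (hν : IsDisintegration μ ℙ ν) (hν' : IsDisintegration μ ℙ ν')
    {E : Set X} (hE : MeasurableSet E) :
    μ {x | ν (partOf ℙ x) E < ν' (partOf ℙ x) E} = 0 := by
  set g : X → ENNReal := fun x => ν (partOf ℙ x) E with hg
  set h : X → ENNReal := fun x => ν' (partOf ℙ x) E with hh
  have hgm : Measurable g := (hν.2.2 E hE).1
  have hhm : Measurable h := (hν'.2.2 E hE).1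
  set Q : Set X := {x | g x < h x} with hQdef
  have hQ : MeasurableSet Q := measurableSet_lt hgm hhm
  have hsat : ∀ x ∈ Q, partOf ℙ x ⊆ Q := by
    intro x hx y hy
    have hxy : partOf ℙ y = partOf ℙ x := partOf_eq_of_mem hpart hy
    simpa only [hQdef, mem_setOf_eq, hg, hh, hxy] using hx
  have heq : ∫⁻ x in Q, g x ∂μ = ∫⁻ x in Q, h x ∂μ := by
    rw [← lintegral_saturated hpart hmeas hν hE hQ hsat,
      ← lintegral_saturated hpart hmeas hν' hE hQ hsat]
  have hgle : ∀ x, g x ≤ 1 := by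
    intro x
    have : IsProbabilityMeasure (ν (partOf ℙ x)) := hν.1 _ (partOf_spec hpart x).1
    exact (measure_mono (subset_univ E)).trans (le_of_eq measure_univ)
  have hfin : ∫⁻ x in Q, g x ∂μ ≠ ⊤ := by
    refine ne_of_lt (lt_of_le_of_lt (lintegral_mono hgle) ?_)
    rw [setLIntegral_one]
    exact lt_of_le_of_lt prob_le_one ENNReal.one_lt_top
  have hle : g ≤ᵐ[μ.restrict Q] h :=
    (ae_restrict_iff' hQ).2 (Filter.Eventually.of_forall fun x hx => hx.le)
  have hae : g =ᵐ[μ.restrict Q] h :=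
    ae_eq_of_ae_le_of_lintegral_le hle hfin hhm.aemeasurable heq.ge
  have hQsub : Q ⊆ {x | g x ≠ h x} := fun x hx => ne_of_lt hx
  refine le_antisymm ?_ zero_le
  calc μ Q = μ.restrict Q Q := (Measure.restrict_apply_self μ Q).symm
    _ ≤ μ.restrict Q {x | g x ≠ h x} := measure_mono hQsub
    _ = 0 := hae

/-- If the σ-algebra is countably generated then any two disintegrations of a
probability measure `μ` with respect to a partition `ℙ` into measurable sets agree for
`μ̂`-almost every `P` (equivalently, after pulling back along the canonical projection,



for `μ`-almost every `x`). -/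
theorem uniqueness_of_disintegration {X : Type*} [MeasurableSpace X]
    [MeasurableSpace.CountablyGenerated X]
    (μ : Measure X) [IsProbabilityMeasure μ]
    (ℙ : Set (Set X)) (hpart : IsPartition ℙ) (hmeas : ∀ P ∈ ℙ, MeasurableSet P)
    (ν ν' : Set X → Measure X)
    (hν : IsDisintegration μ ℙ ν) (hν' : IsDisintegration μ ℙ ν') :
    ∀ᵐ x ∂μ, ν (partOf ℙ x) = ν' (partOf ℙ x) := by
  set C : Set (Set X) := generatePiSystem (MeasurableSpace.countableGeneratingSet X) with hC
  have hCc : C.Countable :=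
    countable_generatePiSystem MeasurableSpace.countable_countableGeneratingSet
  have hCgen : MeasurableSpace.generateFrom C = ‹MeasurableSpace X› := by
    rw [hC, generateFrom_generatePiSystem_eq,
      MeasurableSpace.generateFrom_countableGeneratingSet]
  have hCmeas : ∀ E ∈ C, MeasurableSet E := fun E hE =>
    hCgen ▸ MeasurableSpace.measurableSet_generateFrom hE
  have hae : ∀ᵐ x ∂μ, ∀ E ∈ C, ν (partOf ℙ x) E = ν' (partOf ℙ x) E := by
    rw [ae_ball_iff hCc]
    intro E hE
    have h1 := null_lt_set hpart hmeas hν hν' (hCmeas E hE)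
    have h2 := null_lt_set hpart hmeas hν' hν (hCmeas E hE)
    have : μ ({x | ν (partOf ℙ x) E < ν' (partOf ℙ x) E} ∪
        {x | ν' (partOf ℙ x) E < ν (partOf ℙ x) E}) = 0 :=
      le_antisymm ((measure_union_le _ _).trans (by rw [h1, h2, add_zero])) zero_le
    refine (measure_mono_null ?_ this : _)
    intro x hx
    rcases lt_or_gt_of_ne hx with h | h
    · exact Or.inl h
    · exact Or.inr h
  filter_upwards [hae] with x hx
  have hPm : partOf ℙ x ∈ ℙ := (partOf_spec hpart x).1
  have h1 : IsProbabilityMeasure (ν (partOf ℙ x)) := hν.1 _ hPm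
  have h2 : IsProbabilityMeasure (ν' (partOf ℙ x)) := hν'.1 _ hPm
  exact ext_of_generate_finite C hCgen.symm (isPiSystem_generatePiSystem _) hx
    (by rw [measure_univ, measure_univ])


end ErgodicDecomposition
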